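/- Let n, x ≥ 1 be integers with 4x ≤ 3n and with (n, x) not among the six exceptional pairs (2,1), (3,2), (4,3), (6,4), (7,5), (8,6). Then n^x · e^{-1/(12x)} > √(2π) · x^x · √x, as real numbers. -/

import Mathlib

open Real

private lemma aux16 : ∀ x : ℕ, 7 ≤ x → 7 * 9 ^ x * x ≤ 16 ^ x := by
  intro x hx
  induction x with
  | zero => omega
  | succ k ih =>
    rcases Nat.lt_or_ge k 7 with h | h
    · have hk : k = 6 := by omega
      subst hk; norm_num
    · have h1 := ih h
      have h2 : 16 ^ (k + 1) = 16 * 16 ^ k := by ring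
      have h3 : 7 * 9 ^ (k + 1) * (k + 1) ≤ 16 * (7 * 9 ^ k * k) := by
        have : 9 ^ (k + 1) = 9 * 9 ^ k := by ring
        rw [this]
        have hp : 0 < 9 ^ k := Nat.pow_pos (by norm_num)
        nlinarith
      calc 7 * 9 ^ (k + 1) * (k + 1) ≤ 16 * (7 * 9 ^ k * k) := h3
        _ ≤ 16 * 16 ^ k := by omega
        _ = 16 ^ (k + 1) := h2.symm

private lemma keyNat (n x : ℕ) (hx : 1 ≤ x) (hxn : 4 * x ≤ 3 * n)
    (h1 : ¬(n = 2 ∧ x = 1)) (h2 : ¬(n = 3 ∧ x = 2)) (h3 : ¬(n = 4 ∧ x = 3))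
    (h4 : ¬(n = 6 ∧ x = 4)) (h5 : ¬(n = 7 ∧ x = 5)) (h6 : ¬(n = 8 ∧ x = 6)) :
    6283186 * (12 * x) ^ 2 * x ^ (2 * x + 1) < 1000000 * (12 * x - 1) ^ 2 * n ^ (2 * x) := by
  rcases Nat.lt_or_ge x 7 with hlt | hge
  · interval_cases x
    · have hn3 : 3 ≤ n := by omega
      have := Nat.pow_le_pow_left hn3 2
      norm_num at this ⊢
      nlinarith
    · have hn4 : 4 ≤ n := by omega
      have := Nat.pow_le_pow_left hn4 4
      norm_num at this ⊢
      nlinarith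
    · have hn5 : 5 ≤ n := by omega
      have := Nat.pow_le_pow_left hn5 6
      norm_num at this ⊢
      nlinarith
    · have hn7 : 7 ≤ n := by omega
      have := Nat.pow_le_pow_left hn7 8
      norm_num at this ⊢
      nlinarith
    · have hn8 : 8 ≤ n := by omega
      have := Nat.pow_le_pow_left hn8 10
      norm_num at this ⊢
      nlinarith
    · have hn9 : 9 ≤ n := by omega
      have := Nat.pow_le_pow_left hn9 12
      norm_num at this ⊢
      nlinarith
  · -- x ≥ 7
    have h16 := aux16 x hge
    have hpow : (4 * x) ^ (2 * x) ≤ (3 * n) ^ (2 * x) := Nat.pow_le_pow_left hxn _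
    have hrw1 : (4 * x) ^ (2 * x) = 16 ^ x * x ^ (2 * x) := by
      rw [mul_pow, pow_mul]; norm_num
    have hrw2 : (3 * n) ^ (2 * x) = 9 ^ x * n ^ (2 * x) := by
      rw [mul_pow, pow_mul]; norm_num
    have h9pos : 0 < 9 ^ x := Nat.pow_pos (by norm_num)
    have hnk : 7 * x ^ (2 * x + 1) ≤ n ^ (2 * x) := by
      have hA : 9 ^ x * (7 * x ^ (2 * x + 1)) ≤ 9 ^ x * n ^ (2 * x) := by
        calc 9 ^ x * (7 * x ^ (2 * x + 1)) = (7 * 9 ^ x * x) * x ^ (2 * x) := by ring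
          _ ≤ 16 ^ x * x ^ (2 * x) := Nat.mul_le_mul_right _ h16
          _ = (4 * x) ^ (2 * x) := hrw1.symm
          _ ≤ (3 * n) ^ (2 * x) := hpow
          _ = 9 ^ x * n ^ (2 * x) := hrw2
      exact Nat.le_of_mul_le_mul_left hA h9pos
    -- (84*(12x-1))^2 ≥ (996 x)^2
    have hsq : 996 * x ≤ 84 * (12 * x - 1) := by omega
    have hsq2 : (996 * x) ^ 2 ≤ (84 * (12 * x - 1)) ^ 2 := Nat.pow_le_pow_left hsq 2
    have hsq3 : 992016 * x ^ 2 ≤ 7056 * (12 * x - 1) ^ 2 := by nlinarith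
    have hxp : 0 < x ^ (2 * x + 1) := Nat.pow_pos (by omega)
    have hx2 : 0 < x ^ 2 := Nat.pow_pos (by omega)
    -- multiply everything out
    have lhs7056 : 7056 * (6283186 * (12 * x) ^ 2 * x ^ (2 * x + 1))
        = 6384119099904 * (x ^ 2 * x ^ (2 * x + 1)) := by ring
    have rhs7056 : 7056 * (1000000 * (12 * x - 1) ^ 2 * n ^ (2 * x))
        = 1000000 * (7056 * (12 * x - 1) ^ 2) * n ^ (2 * x) := by ring
    have step : 6384119099904 * (x ^ 2 * x ^ (2 * x + 1))
        < 1000000 * (7056 * (12 * x - 1) ^ 2) * n ^ (2 * x) := by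
      calc 6384119099904 * (x ^ 2 * x ^ (2 * x + 1))
          < 6944112 * 1000000 * (x ^ 2 * x ^ (2 * x + 1)) := by
            have hxx : 0 < x ^ 2 * x ^ (2 * x + 1) := Nat.mul_pos hx2 hxp
            nlinarith
        _ = 1000000 * (992016 * x ^ 2) * (7 * x ^ (2 * x + 1)) := by ring
        _ ≤ 1000000 * (7056 * (12 * x - 1) ^ 2) * (7 * x ^ (2 * x + 1)) := by
            apply Nat.mul_le_mul_right
            exact Nat.mul_le_mul_left _ hsq3
        _ ≤ 1000000 * (7056 * (12 * x - 1) ^ 2) * n ^ (2 * x) := by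
            exact Nat.mul_le_mul_left _ hnk
    omega

/-- For integers `n, x ≥ 1` with `4x ≤ 3n` and `(n, x)` not among the
six exceptional pairs `(2,1), (3,2), (4,3), (6,4), (7,5), (8,6)`, one has
`n^x · e^(-1/(12x)) > √(2π) · x^x · √x` as real numbers. -/
theorem stmt_9 (n x : ℕ) (hn : 1 ≤ n) (hx : 1 ≤ x) (hxn : 4 * x ≤ 3 * n)
    (hexc : (n, x) ∉ ({(2, 1), (3, 2), (4, 3), (6, 4), (7, 5), (8, 6)} :
      Finset (ℕ × ℕ))) :
    Real.sqrt (2 * π) * ((x : ℝ)) ^ x * Real.sqrt x <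
      ((n : ℝ)) ^ x * Real.exp (-(1 / (12 * (x : ℝ)))) := by
  simp only [Finset.mem_insert, Finset.mem_singleton, Prod.mk.injEq, not_or, not_and] at hexc
  obtain ⟨h1, h2, h3, h4, h5, h6⟩ := hexc
  have hkey := keyNat n x hx hxn
    (fun h => h1 h.1 h.2) (fun h => h2 h.1 h.2) (fun h => h3 h.1 h.2)
    (fun h => h4 h.1 h.2) (fun h => h5 h.1 h.2) (fun h => h6 h.1 h.2)
  have hx0 : (0:ℝ) < (x:ℝ) := by exact_mod_cast hx
  have hn0 : (0:ℝ) < (n:ℝ) := by exact_mod_cast hn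
  have h12 : (0:ℝ) < 12 * (x:ℝ) := by linarith
  have h1x : (1:ℝ) ≤ (x:ℝ) := by exact_mod_cast hx
  have hc : (0:ℝ) < 1 - 1 / (12 * (x:ℝ)) := by
    have h112 : 1 / (12 * (x:ℝ)) ≤ 1 / 12 := by
      apply one_div_le_one_div_of_le
      · norm_num
      · linarith
    linarith
  have hexp : 1 - 1 / (12 * (x:ℝ)) ≤ Real.exp (-(1 / (12 * (x:ℝ)))) := by
    have := Real.add_one_le_exp (-(1 / (12 * (x:ℝ))))
    linarith
  have hnx : (0:ℝ) < (n:ℝ) ^ x := by positivity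
  -- cast key inequality to ℝ
  have hcast : ((12 * x - 1 : ℕ) : ℝ) = 12 * (x:ℝ) - 1 := by
    have h112 : 1 ≤ 12 * x := by omega
    push_cast [Nat.cast_sub h112]; ring
  have hkeyR : (6283186:ℝ) * (12 * (x:ℝ)) ^ 2 * (x:ℝ) ^ (2 * x + 1)
      < 1000000 * (12 * (x:ℝ) - 1) ^ 2 * (n:ℝ) ^ (2 * x) := by
    have hc2 : ((6283186 * (12 * x) ^ 2 * x ^ (2 * x + 1) : ℕ) : ℝ)
        < ((1000000 * (12 * x - 1) ^ 2 * n ^ (2 * x) : ℕ) : ℝ) := by exact_mod_cast hkey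
    push_cast [hcast] at hc2
    convert hc2 using 2 <;> push_cast <;> ring
  suffices hmain : Real.sqrt (2 * π) * ((x : ℝ)) ^ x * Real.sqrt x
      < (n:ℝ) ^ x * (1 - 1 / (12 * (x:ℝ))) by
    calc Real.sqrt (2 * π) * ((x : ℝ)) ^ x * Real.sqrt x
        < (n:ℝ) ^ x * (1 - 1 / (12 * (x:ℝ))) := hmain
      _ ≤ (n:ℝ) ^ x * Real.exp (-(1 / (12 * (x:ℝ)))) :=
          mul_le_mul_of_nonneg_left hexp hnx.le
  -- rewrite LHS as a single sqrt
  have e2 : Real.sqrt (((x:ℝ) ^ x) ^ 2 * (x:ℝ)) = (x:ℝ) ^ x * Real.sqrt x := by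
    rw [Real.sqrt_mul (sq_nonneg _), Real.sqrt_sq (by positivity)]
  have e1 : Real.sqrt ((2 * π) * (((x:ℝ) ^ x) ^ 2 * (x:ℝ)))
      = Real.sqrt (2 * π) * Real.sqrt (((x:ℝ) ^ x) ^ 2 * (x:ℝ)) :=
    Real.sqrt_mul (by positivity) _
  have hLHS : Real.sqrt (2 * π * (x:ℝ) ^ (2 * x + 1))
      = Real.sqrt (2 * π) * ((x : ℝ)) ^ x * Real.sqrt x := by
    rw [show (2:ℝ) * π * (x:ℝ) ^ (2 * x + 1) = (2 * π) * (((x:ℝ) ^ x) ^ 2 * (x:ℝ)) by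
      rw [← pow_mul]; ring]
    rw [e1, e2]; ring
  rw [← hLHS, Real.sqrt_lt' (by positivity)]
  have hpi : π < 3.141593 := Real.pi_lt_d6
  have hxp : (0:ℝ) < (x:ℝ) ^ (2 * x + 1) := by positivity
  have hnn : ((n:ℝ) ^ x) ^ 2 = (n:ℝ) ^ (2 * x) := by
    rw [← pow_mul, Nat.mul_comm]
  have hcc : (1 - 1 / (12 * (x:ℝ))) = (12 * (x:ℝ) - 1) / (12 * (x:ℝ)) := by
    field_simp
  rw [hcc, mul_pow, div_pow, hnn, ← mul_div_assoc, lt_div_iff₀ (by positivity)]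
  -- goal: 2 * π * x^(2x+1) * (12x)^2 < n^(2x) * (12x-1)^2
  have hp1 : (0:ℝ) < (12 * (x:ℝ)) ^ 2 * (x:ℝ) ^ (2 * x + 1) := by positivity
  have h2pi : 2 * π * 1000000 < 6283186 := by nlinarith
  have hstep : (2 * π * 1000000) * ((12 * (x:ℝ)) ^ 2 * (x:ℝ) ^ (2 * x + 1))
      < 6283186 * ((12 * (x:ℝ)) ^ 2 * (x:ℝ) ^ (2 * x + 1)) :=
    mul_lt_mul_of_pos_right h2pi hp1
  nlinarith [hkeyR, hstep]
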